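/- Let N be a natural number with N > 1 and let m be a natural number with m < N. Then, computing in the natural numbers, (((1 + N)^m mod N²) − 1) / N = m. In particular the map m ↦ (1+N)^m mod N² is injective on {0, 1, …, N−1} and its inverse is computed by the linear formula (c − 1)/N. -/
import Mathlib

lemma pow_modEq (N m : ℕ) : (1 + N) ^ m ≡ 1 + m * N [MOD N ^ 2] := by
  induction m with
  | zero => simp [Nat.ModEq.refl]
  | succ k ih =>
    calc (1 + N) ^ (k + 1) = (1 + N) ^ k * (1 + N) := by ring
    _ ≡ (1 + k * N) * (1 + N) [MOD N ^ 2] := ih.mul_right _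
    _ = 1 + (k + 1) * N + k * N ^ 2 := by ring
    _ ≡ 1 + (k + 1) * N + 0 * N ^ 2 [MOD N ^ 2] := by
        exact Nat.ModEq.add_left _ (by simpa using ((Nat.modEq_zero_iff_dvd.2 dvd_rfl).mul_left k))
    _ = 1 + (k + 1) * N := by ring

lemma pow_mod_eq (N : ℕ) (hN : 1 < N) {m : ℕ} (hm : m < N) :
    (1 + N) ^ m % N ^ 2 = 1 + m * N := by
  have h := (pow_modEq N m).symm
  have hlt : 1 + m * N < N ^ 2 := by
    have : m * N + N ≤ N * N := by
      have := Nat.succ_le_of_lt hm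
      calc m * N + N = (m + 1) * N := by ring
      _ ≤ N * N := Nat.mul_le_mul_right N this
    nlinarith
  calc (1 + N) ^ m % N ^ 2 = (1 + m * N) % N ^ 2 := pow_modEq N m
  _ = 1 + m * N := Nat.mod_eq_of_lt hlt

/-- For `N > 1`, computing in `ℕ`: for every `m < N`,
`(((1 + N)^m mod N²) − 1) / N = m`; in particular the map
`m ↦ (1+N)^m mod N²` is injective on `{0, 1, …, N−1}`,
with inverse given by the linear formula `(c − 1)/N`. -/
theorem defe_pow_mod_decrypt (N : ℕ) (hN : 1 < N) :
    (∀ m : ℕ, m < N → (((1 + N) ^ m % N ^ 2) - 1) / N = m) ∧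
    Set.InjOn (fun m : ℕ => (1 + N) ^ m % N ^ 2) (Set.Iio N) := by
  have hdec : ∀ m : ℕ, m < N → (((1 + N) ^ m % N ^ 2) - 1) / N = m := by
    intro m hm
    rw [pow_mod_eq N hN hm]
    simp [Nat.mul_div_cancel _ (by omega : 0 < N)]
  refine ⟨hdec, ?_⟩
  intro a ha b hb hab
  have h1 := hdec a ha
  have h2 := hdec b hb
  simp only at hab
  rw [hab] at h1
  omega
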